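/- arXiv:1705.08580 — 5 statements merged into one kernel-verified Lean document; each statement's English description precedes it below -/
import Mathlib

section
/- Let A ∈ ℝ^{n×n} be a symmetric matrix and let λ ≥ ‖A‖_op, where ‖·‖_op denotes the spectral (operator) norm. Then the matrix 𝟙𝟙ᵀ/n is a maximizer of SDP-λ: every matrix X ∈ ℝ^{n×n} that is positive semidefinite, entrywise nonnegative and satisfies X𝟙 = 𝟙 obeys trace(AX) − λ·trace(X) ≤ trace(A·𝟙𝟙ᵀ/n) − λ. -/
open Matrix BigOperators

noncomputable section

/-- The spectral (ℓ2 → ℓ2 operator) norm of a real square matrix. -/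
def opNorm {n : ℕ} (M : Matrix (Fin n) (Fin n) ℝ) : ℝ :=
  ‖Matrix.toEuclideanCLM (𝕜 := ℝ) M‖

lemma quad_bound {n : ℕ} (A : Matrix (Fin n) (Fin n) ℝ) (v : Fin n → ℝ) :
    v ⬝ᵥ A.mulVec v ≤ opNorm A * (v ⬝ᵥ v) := by
  set v' : EuclideanSpace ℝ (Fin n) := (WithLp.equiv 2 _).symm v with hv'
  have h1 : v ⬝ᵥ A.mulVec v = inner ℝ v' (Matrix.toEuclideanCLM (𝕜 := ℝ) A v') := by
    simp [hv', PiLp.inner_apply, dotProduct, Matrix.toLin'_apply, mulVec]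
    exact Finset.sum_congr rfl fun i _ => mul_comm _ _
  have h2 : v ⬝ᵥ v = ‖v'‖ ^ 2 := by
    rw [← real_inner_self_eq_norm_sq]
    simp [hv', PiLp.inner_apply, dotProduct]
    rw [EuclideanSpace.norm_sq_eq]; simp [sq]
  rw [h1, h2]
  calc inner ℝ v' (Matrix.toEuclideanCLM (𝕜 := ℝ) A v')
      ≤ ‖v'‖ * ‖Matrix.toEuclideanCLM (𝕜 := ℝ) A v'‖ := real_inner_le_norm _ _
    _ ≤ ‖v'‖ * (opNorm A * ‖v'‖) := by
        gcongr
        exact (Matrix.toEuclideanCLM (𝕜 := ℝ) A).le_opNorm v'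
    _ = opNorm A * ‖v'‖ ^ 2 := by ring

lemma trace_mul_le_opNorm {n : ℕ} (A S : Matrix (Fin n) (Fin n) ℝ) (hS : S.PosSemidef) :
    (A * S).trace ≤ opNorm A * S.trace := by
  obtain ⟨B, rfl⟩ : ∃ B : Matrix (Fin n) (Fin n) ℝ, S = Bᴴ * B := by
    open scoped MatrixOrder in exact CStarAlgebra.nonneg_iff_eq_star_mul_self.mp hS.nonneg
  have h1 : (A * (Bᴴ * B)).trace = ∑ i, (fun j => B i j) ⬝ᵥ A.mulVec (fun j => B i j) := by
    rw [← mul_assoc, Matrix.trace_mul_comm, Matrix.trace]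
    refine Finset.sum_congr rfl fun i _ => ?_
    simp only [Matrix.diag_apply, Matrix.mul_apply, Matrix.conjTranspose_apply, dotProduct,
      Matrix.mulVec, star_trivial, Finset.sum_mul, Finset.mul_sum]
  have h2 : (Bᴴ * B).trace = ∑ i, (fun j => B i j) ⬝ᵥ (fun j => B i j) := by
    simp only [Matrix.trace, Matrix.diag_apply, Matrix.mul_apply, Matrix.conjTranspose_apply,
      dotProduct, star_trivial]
    rw [Finset.sum_comm]

  rw [h1, h2, Finset.mul_sum]
  exact Finset.sum_le_sum fun i _ => quad_bound A _

/-- Proposition 1: if `λ ≥ ‖A‖_op`, then the all-`1/n` matrix `𝟙𝟙ᵀ/n` maximizes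
SDP-λ: every psd, entrywise nonnegative `X` with unit row sums satisfies
`trace(AX) − λ·trace(X) ≤ trace(A·𝟙𝟙ᵀ/n) − λ`. -/
theorem sdp_lambda_degenerate (n : ℕ) (hn : 1 ≤ n)
    (A : Matrix (Fin n) (Fin n) ℝ) (hA : A.IsSymm)
    (lam : ℝ) (hlam : opNorm A ≤ lam) :
    ∀ X : Matrix (Fin n) (Fin n) ℝ, X.PosSemidef → (∀ i j, 0 ≤ X i j) →
      (∀ i, ∑ j, X i j = 1) →
      (A * X).trace - lam * X.trace
        ≤ (A * Matrix.of (fun _ _ : Fin n => (1 : ℝ) / n)).trace - lam := by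
  intro X hXpsd _ hrow
  have hn0 : (n : ℝ) ≠ 0 := Nat.cast_ne_zero.mpr (by omega)
  set J : Matrix (Fin n) (Fin n) ℝ := Matrix.of (fun _ _ : Fin n => (1 : ℝ) / n) with hJ
  have hsymm : ∀ i j, X j i = X i j := fun i j => (hXpsd.1.apply i j).symm ▸ rfl
  have hcol : ∀ j, ∑ i, X i j = 1 := fun j => by
    rw [Finset.sum_congr rfl fun i _ => hsymm j i]; exact hrow j
  have hXJ : X * J = J := by
    ext i j
    simp only [Matrix.mul_apply, hJ, Matrix.of_apply, mul_one_div]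
    rw [← Finset.sum_div, hrow i]
  have hJX : J * X = J := by
    ext i j
    simp only [Matrix.mul_apply, hJ, Matrix.of_apply]
    rw [Finset.sum_congr rfl fun k _ => (div_mul_eq_mul_div _ _ _).trans (by rw [one_mul]),
      ← Finset.sum_div, hcol j]
  have hJJ : J * J = J := by
    ext i j
    simp only [Matrix.mul_apply, hJ, Matrix.of_apply, Finset.sum_const, Finset.card_univ,
      Fintype.card_fin, nsmul_eq_mul]
    field_simp
  have hJH : Jᴴ = J := by ext i j; simp [hJ]
  have hY : (1 - J)ᴴ * X * (1 - J) = X - J := by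
    rw [conjTranspose_sub, conjTranspose_one, hJH, sub_mul, one_mul, hJX, mul_sub, mul_one,
      sub_mul, hXJ, hJJ]
    abel
  have hYpsd : (X - J).PosSemidef := hY ▸ hXpsd.conjTranspose_mul_mul_same (1 - J)
  have htrJ : J.trace = 1 := by
    simp [Matrix.trace, hJ, Matrix.diag, Finset.sum_const, Finset.card_univ, hn0]
  have htrY : 0 ≤ (X - J).trace := by
    rw [Matrix.trace]
    exact Finset.sum_nonneg fun i _ => by
      simpa using hYpsd.diag_nonneg (i := i)
  have key : (A * (X - J)).trace ≤ lam * (X - J).trace :=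
    (trace_mul_le_opNorm A (X - J) hYpsd).trans (mul_le_mul_of_nonneg_right hlam htrY)
  have expand : (A * (X - J)).trace = (A * X).trace - (A * J).trace := by
    rw [mul_sub, Matrix.trace_sub]
  have expand2 : (X - J).trace = X.trace - 1 := by rw [Matrix.trace_sub, htrJ]
  rw [expand, expand2] at key
  linarith
end
end

section
/- Let A ∈ ℝ^{n×n} be symmetric, fix a partition of {1,…,n} into nonempty clusters S_1,…,S_r with sizes m_k, and let β ∈ ℝ. Suppose: (i) uᵀAu ≤ β·‖u‖² for every u ∈ ℝ^n satisfying Σ_{i∈S_k} u_i = 0 for every k; and (ii) for all k ≠ ℓ and all u ∈ S_k, v ∈ S_ℓ: d_u(S_k)/m_k − d_u(S_ℓ)/m_ℓ + d_v(S_ℓ)/m_ℓ − d_v(S_k)/m_k + (𝟙ᵀA_{S_kS_ℓ}𝟙)/(m_k·m_ℓ) − (𝟙ᵀA_{S_k}𝟙)/(2·m_k²) − (𝟙ᵀA_{S_ℓ}𝟙)/(2·m_ℓ²) ≥ β/(2·m_k) + β/(2·m_ℓ). Then X0 is a maximizer of SDP-PW(r): every X feasible for SDP-PW(r) satisfies trace(AX)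 ≤ trace(AX0). -/
open Matrix BigOperators

noncomputable section

/-- The cluster `S_k` of a cluster assignment `z`. -/
def cluster {n r : ℕ} (z : Fin n → Fin r) (k : Fin r) : Finset (Fin n) :=
  Finset.univ.filter (fun i => z i = k)

/-- The cluster size `m_k`. -/
def csize {n r : ℕ} (z : Fin n → Fin r) (k : Fin r) : ℕ := (cluster z k).card

/-- The normalized ground-truth clustering matrix `X0`. -/
def X0 {n r : ℕ} (z : Fin n → Fin r) : Matrix (Fin n) (Fin n) ℝ :=
  Matrix.of fun i j => if z i = z j then (1 : ℝ) / (csize z (z i)) else 0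

/-- `d_u(S_k) = Σ_{j ∈ S_k} A_{uj}`, the number of edges from node `u` to cluster `k`. -/
def deg {n r : ℕ} (A : Matrix (Fin n) (Fin n) ℝ) (z : Fin n → Fin r)
    (u : Fin n) (k : Fin r) : ℝ :=
  ∑ j ∈ cluster z k, A u j

/-- `𝟙ᵀ A_{S_k S_ℓ} 𝟙 = Σ_{i ∈ S_k} Σ_{j ∈ S_ℓ} A_{ij}`. -/
def blocksum {n r : ℕ} (A : Matrix (Fin n) (Fin n) ℝ) (z : Fin n → Fin r)
    (k ℓ : Fin r) : ℝ :=
  ∑ i ∈ cluster z k, ∑ j ∈ cluster z ℓ, A i j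

/-- Feasibility for SDP-PW(r): psd, entrywise nonnegative, row sums one, trace `r`. -/
def FeasiblePW {n : ℕ} (r : ℕ) (X : Matrix (Fin n) (Fin n) ℝ) : Prop :=
  X.PosSemidef ∧ (∀ i j, 0 ≤ X i j) ∧ (∀ i, ∑ j, X i j = 1) ∧ X.trace = (r : ℝ)

section Aux
variable {n r : ℕ} (z : Fin n → Fin r)

lemma mem_cluster {i : Fin n} {k : Fin r} : i ∈ cluster z k ↔ z i = k := by
  simp [cluster]

lemma self_mem_cluster (i : Fin n) : i ∈ cluster z (z i) := by simp [cluster]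

lemma csize_zpos (i : Fin n) : 0 < (csize z (z i) : ℝ) := by
  have : 0 < csize z (z i) := Finset.card_pos.2 ⟨i, self_mem_cluster z i⟩
  exact_mod_cast this

lemma csize_pos (hz : Function.Surjective z) (k : Fin r) : 0 < (csize z k : ℝ) := by
  obtain ⟨i, rfl⟩ := hz k
  exact csize_zpos z i

lemma sum_clusters (f : Fin n → ℝ) : ∑ k, ∑ i ∈ cluster z k, f i = ∑ i, f i :=
  Finset.sum_fiberwise Finset.univ z f

lemma X0_apply (i j : Fin n) :
    X0 z i j = if z i = z j then (1 : ℝ) / (csize z (z i)) else 0 := rfl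

lemma X0_symm_apply (i j : Fin n) : X0 z j i = X0 z i j := by
  simp only [X0_apply]
  rcases eq_or_ne (z i) (z j) with h | h
  · rw [if_pos h.symm, if_pos h, h]
  · rw [if_neg (Ne.symm h), if_neg h]

lemma X0_mul_X0 : X0 z * X0 z = X0 z := by
  ext i j
  rw [Matrix.mul_apply]
  simp only [X0_apply]
  by_cases h : z i = z j
  · rw [if_pos h]
    have h1 : ∀ w, (if z i = z w then (1:ℝ)/(csize z (z i)) else 0) *
        (if z w = z j then (1:ℝ)/(csize z (z w)) else 0)
        = if z w = z i then (1:ℝ)/(csize z (z i)) * ((1:ℝ)/(csize z (z i))) else 0 := by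
      intro w
      by_cases hw : z w = z i
      · rw [if_pos hw.symm, if_pos (hw.trans h), if_pos hw, hw]
      · rw [if_neg (fun hh => hw hh.symm), zero_mul, if_neg hw]
    rw [Finset.sum_congr rfl (fun w _ => h1 w), ← Finset.sum_filter, Finset.sum_const,
      nsmul_eq_mul]
    have hcard : (Finset.univ.filter fun w => z w = z i).card = csize z (z i) := rfl
    have hm : (csize z (z i) : ℝ) ≠ 0 := ne_of_gt (csize_zpos z i)
    rw [hcard]
    field_simp
  · rw [if_neg h]
    apply Finset.sum_eq_zero
    intro w _
    by_cases hw : z i = z w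
    · rw [if_neg (show ¬ z w = z j from fun hh => h (hw.trans hh)), mul_zero]
    · rw [if_neg hw, zero_mul]

lemma X0_trace (hz : Function.Surjective z) : (X0 z).trace = (r : ℝ) := by
  have h1 : (X0 z).trace = ∑ i, (1:ℝ)/(csize z (z i)) := by
    simp [Matrix.trace, Matrix.diag, X0_apply]
  rw [h1, ← sum_clusters z (fun i => (1:ℝ)/(csize z (z i)))]
  have h2 : ∀ k : Fin r, ∑ i ∈ cluster z k, (1:ℝ)/(csize z (z i)) = 1 := by
    intro k
    have hm : (csize z k : ℝ) ≠ 0 := ne_of_gt (csize_pos z hz k)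
    rw [Finset.sum_congr rfl (fun i hi => by rw [(mem_cluster z).1 hi])]
    rw [Finset.sum_const, nsmul_eq_mul,
      show (cluster z k).card = csize z k from rfl]
    field_simp
  rw [Finset.sum_congr rfl (fun k _ => h2 k)]
  simp

variable (A : Matrix (Fin n) (Fin n) ℝ)

lemma blocksum_comm (hA : A.IsSymm) (k ℓ : Fin r) :
    blocksum A z k ℓ = blocksum A z ℓ k := by
  rw [blocksum, blocksum, Finset.sum_comm (f := fun i j => A i j)]
  exact Finset.sum_congr rfl fun j _ => Finset.sum_congr rfl fun i _ => hA.apply j i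

lemma AP_apply (u v : Fin n) :
    (A * X0 z) u v = deg A z u (z v) / (csize z (z v)) := by
  rw [Matrix.mul_apply]
  have h1 : ∀ w, A u w * X0 z w v
      = if z w = z v then A u w / (csize z (z v)) else 0 := by
    intro w
    rw [X0_apply]
    by_cases hw : z w = z v
    · rw [if_pos hw, if_pos hw, hw]; ring
    · rw [if_neg hw, if_neg hw, mul_zero]
  rw [Finset.sum_congr rfl (fun w _ => h1 w),
    ← Finset.sum_filter (fun w => z w = z v) (fun w => A u w / (csize z (z v) : ℝ))]
  rw [deg, Finset.sum_div]
  rfl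

lemma PA_apply (hA : A.IsSymm) (u v : Fin n) :
    (X0 z * A) u v = deg A z v (z u) / (csize z (z u)) := by
  rw [Matrix.mul_apply]
  have h1 : ∀ w, X0 z u w * A w v
      = if z w = z u then A v w / (csize z (z u)) else 0 := by
    intro w
    rw [X0_apply]
    by_cases hw : z w = z u
    · rw [if_pos hw.symm, if_pos hw, ← hA.apply w v]; ring
    · rw [if_neg (fun hh => hw hh.symm), zero_mul, if_neg hw]
  rw [Finset.sum_congr rfl (fun w _ => h1 w),
    ← Finset.sum_filter (fun w => z w = z u) (fun w => A v w / (csize z (z u) : ℝ))]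
  rw [deg, Finset.sum_div]
  rfl

lemma PAP_apply (hA : A.IsSymm) (u v : Fin n) :
    (X0 z * A * X0 z) u v
      = blocksum A z (z u) (z v) / ((csize z (z u)) * (csize z (z v))) := by
  rw [Matrix.mul_apply]
  have h1 : ∀ w, (X0 z * A) u w * X0 z w v
      = if z w = z v then deg A z w (z u) / ((csize z (z u) : ℝ) * (csize z (z v))) else 0 := by
    intro w
    rw [PA_apply z A hA, X0_apply]
    by_cases hw : z w = z v
    · rw [if_pos hw, if_pos hw, hw]; ring
    · rw [if_neg hw, if_neg hw, mul_zero]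
  rw [Finset.sum_congr rfl (fun w _ => h1 w),
    ← Finset.sum_filter (fun w => z w = z v)
      (fun w => deg A z w (z u) / ((csize z (z u) : ℝ) * (csize z (z v))))]
  rw [show (Finset.univ.filter fun w => z w = z v) = cluster z (z v) from rfl]
  rw [← Finset.sum_div]
  congr 1
  rw [show (∑ w ∈ cluster z (z v), deg A z w (z u)) = blocksum A z (z v) (z u) from rfl]
  exact (blocksum_comm z A hA _ _).symm

/-- summing a `X0 * M` column over a cluster gives the plain column sum. -/
lemma PM_cluster_sum (hz : Function.Surjective z) (M : Matrix (Fin n) (Fin n) ℝ)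
    (j : Fin n) (k : Fin r) :
    ∑ i ∈ cluster z k, (X0 z * M) i j = ∑ i ∈ cluster z k, M i j := by
  have hPM : ∀ i, z i = k → (X0 z * M) i j
      = (∑ w ∈ cluster z k, M w j) / (csize z k : ℝ) := by
    intro i hi
    rw [Matrix.mul_apply]
    have h1 : ∀ w, X0 z i w * M w j
        = if z w = k then M w j / (csize z k : ℝ) else 0 := by
      intro w
      rw [X0_apply, hi]
      by_cases hw : z w = k
      · rw [if_pos hw.symm, if_pos hw]; ring
      · rw [if_neg (fun hh => hw hh.symm), zero_mul, if_neg hw]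
    rw [Finset.sum_congr rfl (fun w _ => h1 w),
      ← Finset.sum_filter (fun w => z w = k) (fun w => M w j / (csize z k : ℝ))]
    rw [show (Finset.univ.filter fun w => z w = k) = cluster z k from rfl, ← Finset.sum_div]
  rw [Finset.sum_congr rfl (fun i hi => hPM i ((mem_cluster z).1 hi))]
  rw [Finset.sum_const, nsmul_eq_mul, show (cluster z k).card = csize z k from rfl]
  have hm : (csize z k : ℝ) ≠ 0 := ne_of_gt (csize_pos z hz k)
  field_simp

lemma trace_mul_eq {n : ℕ} (M N : Matrix (Fin n) (Fin n) ℝ) :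
    (M * N).trace = ∑ i, ∑ j, M i j * N j i := by
  simp [Matrix.trace, Matrix.diag, Matrix.mul_apply]

end Aux

/-- Deterministic sufficient conditions for the optimality of `X0` in SDP-PW(r):
if (i) `uᵀAu ≤ β‖u‖²` for all `u` summing to zero on each cluster, and (ii) the
degree-separation inequality holds for all pairs of nodes in distinct clusters, then
`X0` maximizes `trace(AX)` over the feasible set of SDP-PW(r). -/
theorem deterministic_sufficient_conditions (n r : ℕ) (hn : 1 ≤ n) (hr : 1 ≤ r)
    (z : Fin n → Fin r) (hz : Function.Surjective z)
    (A : Matrix (Fin n) (Fin n) ℝ) (hA : A.IsSymm) (β : ℝ)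
    (hquad : ∀ u : Fin n → ℝ, (∀ k, ∑ i ∈ cluster z k, u i = 0) →
      u ⬝ᵥ A.mulVec u ≤ β * ∑ i, u i ^ 2)
    (hdeg : ∀ k ℓ : Fin r, k ≠ ℓ → ∀ u v : Fin n, z u = k → z v = ℓ →
      deg A z u k / (csize z k : ℝ) - deg A z u ℓ / (csize z ℓ : ℝ)
        + deg A z v ℓ / (csize z ℓ : ℝ) - deg A z v k / (csize z k : ℝ)
        + blocksum A z k ℓ / ((csize z k : ℝ) * (csize z ℓ : ℝ))
        - blocksum A z k k / (2 * (csize z k : ℝ) ^ 2)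
        - blocksum A z ℓ ℓ / (2 * (csize z ℓ : ℝ) ^ 2)
      ≥ β / (2 * (csize z k : ℝ)) + β / (2 * (csize z ℓ : ℝ))) :
    ∀ X : Matrix (Fin n) (Fin n) ℝ, FeasiblePW r X →
      (A * X).trace ≤ (A * X0 z).trace := by
  intro X hX
  obtain ⟨hpsd, hnn, hrow, htr⟩ := hX
  classical
  set P : Matrix (Fin n) (Fin n) ℝ := X0 z with hPdef
  -- symmetry of X
  have hXsymm : ∀ i j, X j i = X i j := by
    intro i j
    have h := congrFun (congrFun hpsd.1 i) j
    rw [Matrix.conjTranspose_apply] at h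
    simpa using h
  -- column sums of X are 1
  have hcol : ∀ j, ∑ i, X i j = 1 := by
    intro j
    rw [Finset.sum_congr rfl (fun i _ => hXsymm j i)]
    exact hrow j
  -- the dual potential f
  set f : Fin n → ℝ := fun u => deg A z u (z u) / (csize z (z u) : ℝ)
      - blocksum A z (z u) (z u) / (2 * (csize z (z u) : ℝ) ^ 2)
      - β / (2 * (csize z (z u) : ℝ)) with hfdef
  -- Step S1 : trace split
  have S1 : (A * X).trace = ((A * P + P * A - P * A * P) * X).trace
      + (A * ((1 - P) * X * (1 - P))).trace := by
    have e1 : A * ((1 - P) * X * (1 - P))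
        = A * X - A * P * X - A * (X * P) + A * (P * X * P) := by
      noncomm_ring
    have e2 : (A * P + P * A - P * A * P) * X
        = A * P * X + P * A * X - P * A * P * X := by
      noncomm_ring
    rw [e1, e2]
    rw [Matrix.trace_add, Matrix.trace_sub, Matrix.trace_sub, Matrix.trace_add,
      Matrix.trace_sub]
    have c1 : (A * (X * P)).trace = (P * A * X).trace := by
      rw [← Matrix.mul_assoc, Matrix.trace_mul_cycle]
    have c2 : (A * (P * X * P)).trace = (P * A * P * X).trace := by
      rw [← Matrix.mul_assoc, Matrix.trace_mul_cycle, ← Matrix.mul_assoc]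
    rw [c1, c2]
    ring
  -- Step S3 : trace of corner
  have hQidem : ((1 : Matrix (Fin n) (Fin n) ℝ) - P) * (1 - P) = 1 - P := by
    simp only [Matrix.sub_mul, Matrix.mul_sub, Matrix.one_mul, Matrix.mul_one, hPdef,
      X0_mul_X0 z]
    abel
  have S3 : (((1 : Matrix (Fin n) (Fin n) ℝ) - P) * X * (1 - P)).trace
      = (r : ℝ) - (P * X).trace := by
    rw [Matrix.trace_mul_cycle, hQidem, Matrix.sub_mul,
      Matrix.one_mul, Matrix.trace_sub, htr]
  -- Step S2 : quadratic-form bound on the corner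
  have S2 : (A * ((1 - P) * X * (1 - P))).trace
      ≤ β * (((1 : Matrix (Fin n) (Fin n) ℝ) - P) * X * (1 - P)).trace := by
    open MatrixOrder in
    set B := CFC.sqrt X with hBdef
    have hBB : B * B = X := by
      open MatrixOrder in
      exact CFC.sqrt_mul_sqrt_self X (Matrix.nonneg_iff_posSemidef.2 hpsd)
    have hBsym : ∀ i j, B i j = B j i := by
      intro i j
      have h := congrFun (congrFun (open MatrixOrder in Matrix.nonneg_iff_posSemidef.1 (CFC.sqrt_nonneg X)).1 j) i
      rw [Matrix.conjTranspose_apply] at h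
      simpa using h
    set Q : Matrix (Fin n) (Fin n) ℝ := 1 - P with hQdef
    have hQsym : ∀ i j, Q i j = Q j i := by
      intro i j
      by_cases h : i = j
      · rw [h]
      · simp only [hQdef, Matrix.sub_apply, Matrix.one_apply, if_neg h, if_neg (Ne.symm h),
          hPdef]
        rw [X0_symm_apply z i j]
    set R := Q * B with hRdef
    have hfact : Q * X * Q = R * (B * Q) := by
      rw [hRdef, ← hBB]; simp only [Matrix.mul_assoc]
    have hRT : ∀ i j, (B * Q) i j = R j i := by
      intro i j
      rw [Matrix.mul_apply, hRdef, Matrix.mul_apply]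
      exact Finset.sum_congr rfl fun w _ => by rw [hBsym i w, hQsym w j]; ring
    have htrA : (A * (Q * X * Q)).trace
        = ∑ j, (fun i => R i j) ⬝ᵥ A.mulVec (fun i => R i j) := by
      rw [hfact, ← Matrix.mul_assoc, trace_mul_eq (A * R) (B * Q)]
      have h1 : ∀ i, ∑ j, (A * R) i j * (B * Q) j i = ∑ j, (A * R) i j * R i j := by
        intro i
        exact Finset.sum_congr rfl fun j _ => by rw [hRT j i]
      rw [Finset.sum_congr rfl fun i _ => h1 i, Finset.sum_comm]
      refine Finset.sum_congr rfl fun j _ => ?_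
      simp only [dotProduct, Matrix.mulVec, Matrix.mul_apply]
      exact Finset.sum_congr rfl fun i _ => by ring
    have htrQ : (Q * X * Q).trace = ∑ j, ∑ i, (R i j) ^ 2 := by
      rw [hfact, trace_mul_eq R (B * Q)]
      have h1 : ∀ i, ∑ j, R i j * (B * Q) j i = ∑ j, (R i j) ^ 2 := by
        intro i
        exact Finset.sum_congr rfl fun j _ => by rw [hRT j i]; ring
      rw [Finset.sum_congr rfl fun i _ => h1 i, Finset.sum_comm]
    have hcs : ∀ j (k : Fin r), ∑ i ∈ cluster z k, R i j = 0 := by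
      intro j k
      have h1 : ∀ i, R i j = B i j - (X0 z * B) i j := by
        intro i
        rw [hRdef, hQdef, Matrix.sub_mul, Matrix.one_mul, Matrix.sub_apply, hPdef]
      rw [Finset.sum_congr rfl fun i _ => h1 i, Finset.sum_sub_distrib,
        PM_cluster_sum z hz B j k, sub_self]
    calc (A * (Q * X * Q)).trace
        = ∑ j, (fun i => R i j) ⬝ᵥ A.mulVec (fun i => R i j) := htrA
      _ ≤ ∑ j, β * ∑ i, (R i j) ^ 2 :=
          Finset.sum_le_sum fun j _ => hquad _ (fun k => hcs j k)
      _ = β * (Q * X * Q).trace := by rw [htrQ, Finset.mul_sum]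
  -- Step S4 : entrywise bound
  have S4 : ((A * P + P * A - P * A * P) * X).trace - β * (P * X).trace
      ≤ 2 * ∑ u, f u := by
    rw [trace_mul_eq, trace_mul_eq]
    have key : ∀ u v, (A * P + P * A - P * A * P) u v * X v u - β * (P u v * X v u)
        ≤ (f u + f v) * X v u := by
      intro u v
      have hnn' : 0 ≤ X v u := hnn v u
      have hH : (A * P + P * A - P * A * P) u v - β * P u v ≤ f u + f v := by
        simp only [Matrix.add_apply, Matrix.sub_apply, hPdef, hfdef]
        rw [AP_apply z A, PA_apply z A hA, PAP_apply z A hA, X0_apply]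
        by_cases h : z u = z v
        · rw [if_pos h, ← h]
          have hm : (csize z (z u) : ℝ) ≠ 0 := ne_of_gt (csize_zpos z u)
          apply le_of_eq
          field_simp
          ring
        · rw [if_neg h]
          have hd := hdeg (z u) (z v) h u v rfl rfl
          linarith [hd]
      nlinarith [hH, hnn', mul_le_mul_of_nonneg_right hH hnn']
    calc (∑ u, ∑ v, (A * P + P * A - P * A * P) u v * X v u)
          - β * ∑ u, ∑ v, P u v * X v u
        = ∑ u, ∑ v, ((A * P + P * A - P * A * P) u v * X v u - β * (P u v * X v u)) := by
          rw [Finset.mul_sum]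
          rw [← Finset.sum_sub_distrib]
          refine Finset.sum_congr rfl fun u _ => ?_
          rw [Finset.mul_sum, ← Finset.sum_sub_distrib]
      _ ≤ ∑ u, ∑ v, (f u + f v) * X v u :=
          Finset.sum_le_sum fun u _ => Finset.sum_le_sum fun v _ => key u v
      _ = 2 * ∑ u, f u := by
          have e1 : ∀ u, ∑ v, (f u + f v) * X v u
              = f u * (∑ v, X v u) + ∑ v, f v * X v u := by
            intro u
            rw [Finset.mul_sum, ← Finset.sum_add_distrib]
            exact Finset.sum_congr rfl fun v _ => by ring
          rw [Finset.sum_congr rfl fun u _ => e1 u, Finset.sum_add_distrib]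
          have e2 : ∀ u, f u * (∑ v, X v u) = f u := fun u => by rw [hcol u, mul_one]
          rw [Finset.sum_congr rfl fun u _ => e2 u, Finset.sum_comm]
          have e3 : ∀ v, ∑ u, f v * X v u = f v := by
            intro v
            rw [← Finset.mul_sum, hrow v, mul_one]
          rw [Finset.sum_congr rfl fun v _ => e3 v]
          ring
  -- Step S5 : value at X0
  have S5 : (A * P).trace = 2 * ∑ u, f u + β * r := by
    have hdiag : (A * P).trace = ∑ u, deg A z u (z u) / (csize z (z u) : ℝ) := by
      simp only [Matrix.trace, Matrix.diag_apply, hPdef]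
      exact Finset.sum_congr rfl fun u _ => AP_apply z A u u
    have hgroupD : ∑ u, deg A z u (z u) / (csize z (z u) : ℝ)
        = ∑ k, blocksum A z k k / (csize z k : ℝ) := by
      rw [← sum_clusters z (fun u => deg A z u (z u) / (csize z (z u) : ℝ))]
      refine Finset.sum_congr rfl fun k _ => ?_
      have h1 : ∀ u ∈ cluster z k, deg A z u (z u) / (csize z (z u) : ℝ)
          = deg A z u k / (csize z k : ℝ) := fun u hu => by rw [(mem_cluster z).1 hu]
      rw [Finset.sum_congr rfl h1, ← Finset.sum_div]
      rfl
    have hgroupB : ∑ u, blocksum A z (z u) (z u) / (2 * (csize z (z u) : ℝ) ^ 2)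
        = ∑ k, blocksum A z k k / (2 * (csize z k : ℝ)) := by
      rw [← sum_clusters z (fun u => blocksum A z (z u) (z u) / (2 * (csize z (z u) : ℝ) ^ 2))]
      refine Finset.sum_congr rfl fun k _ => ?_
      have h1 : ∀ u ∈ cluster z k, blocksum A z (z u) (z u) / (2 * (csize z (z u) : ℝ) ^ 2)
          = blocksum A z k k / (2 * (csize z k : ℝ) ^ 2) := fun u hu => by
        rw [(mem_cluster z).1 hu]
      rw [Finset.sum_congr rfl h1, Finset.sum_const, nsmul_eq_mul,
        show (cluster z k).card = csize z k from rfl]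
      have hm : (csize z k : ℝ) ≠ 0 := ne_of_gt (csize_pos z hz k)
      field_simp
    have hgroupC : ∑ u, β / (2 * (csize z (z u) : ℝ)) = β * r / 2 := by
      rw [← sum_clusters z (fun u => β / (2 * (csize z (z u) : ℝ)))]
      have h2 : ∀ k : Fin r, ∑ u ∈ cluster z k, β / (2 * (csize z (z u) : ℝ)) = β / 2 := by
        intro k
        have h1 : ∀ u ∈ cluster z k, β / (2 * (csize z (z u) : ℝ))
            = β / (2 * (csize z k : ℝ)) := fun u hu => by rw [(mem_cluster z).1 hu]
        rw [Finset.sum_congr rfl h1, Finset.sum_const, nsmul_eq_mul,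
          show (cluster z k).card = csize z k from rfl]
        have hm : (csize z k : ℝ) ≠ 0 := ne_of_gt (csize_pos z hz k)
        field_simp
      rw [Finset.sum_congr rfl fun k _ => h2 k, Finset.sum_const, nsmul_eq_mul]
      simp only [Finset.card_univ, Fintype.card_fin]
      ring
    have hfsum : ∑ u, f u = (∑ u, deg A z u (z u) / (csize z (z u) : ℝ))
        - (∑ u, blocksum A z (z u) (z u) / (2 * (csize z (z u) : ℝ) ^ 2))
        - (∑ u, β / (2 * (csize z (z u) : ℝ))) := by
      simp only [hfdef]
      rw [Finset.sum_sub_distrib, Finset.sum_sub_distrib]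
    have hTS : ∑ k, blocksum A z k k / (2 * (csize z k : ℝ))
        = (1 / 2) * ∑ k, blocksum A z k k / (csize z k : ℝ) := by
      rw [Finset.mul_sum]
      exact Finset.sum_congr rfl fun k _ => by ring
    rw [hdiag, hfsum, hgroupD, hgroupB, hgroupC, hTS]
    ring
  have S23 : β * (((1 : Matrix (Fin n) (Fin n) ℝ) - P) * X * (1 - P)).trace
      = β * r - β * (P * X).trace := by rw [S3]; ring
  linarith [S1, S2, S23, S4, S5]
end
end

section
/- Let A ∈ ℝ^{n×n} be symmetric, fix a partition of {1,…,n} into nonempty clusters S_1,…,S_r with sizes m_k, let β ∈ ℝ, and let Λ be the matrix of the dual construction. Then for every vector u ∈ ℝ^n satisfying Σ_{i∈S_k} u_i = 0 for every cluster k, one has uᵀΛu = β·‖u‖² − uᵀAu. -/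
open Matrix BigOperators

noncomputable section

/-- `φ_k = −(1/2)·(β + 𝟙ᵀA_{S_k}𝟙/m_k)` of the dual construction. -/
def phi {n r : ℕ} (A : Matrix (Fin n) (Fin n) ℝ) (z : Fin n → Fin r) (β : ℝ)
    (k : Fin r) : ℝ :=
  -(1 / 2) * (β + blocksum A z k k / (csize z k : ℝ))

/-- The dual vector `α`, defined blockwise by `α_{S_k} = (A_{S_k}𝟙 + φ_k·𝟙)/m_k`;
its entry at a node `u ∈ S_k` is `(d_u(S_k) + φ_k)/m_k`. -/
def alpha {n r : ℕ} (A : Matrix (Fin n) (Fin n) ℝ) (z : Fin n → Fin r) (β : ℝ)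
    (u : Fin n) : ℝ :=
  (deg A z u (z u) + phi A z β (z u)) / (csize z (z u) : ℝ)

/-- The dual matrix `Λ`, defined blockwise by
`Λ_{S_k} = −A_{S_k} + 𝟙α_{S_k}ᵀ + α_{S_k}𝟙ᵀ + βI` and, for `k ≠ ℓ`,
`Λ_{S_kS_ℓ} = −(I − E_{m_k}/m_k)·A_{S_kS_ℓ}·(I − E_{m_ℓ}/m_ℓ)`. -/
def Lam {n r : ℕ} (A : Matrix (Fin n) (Fin n) ℝ) (z : Fin n → Fin r) (β : ℝ) :
    Matrix (Fin n) (Fin n) ℝ :=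
  Matrix.of fun u v =>
    if z u = z v then
      -A u v + alpha A z β u + alpha A z β v + (if u = v then β else 0)
    else
      -(A u v - (∑ i ∈ cluster z (z u), A i v) / (csize z (z u) : ℝ)
          - (∑ j ∈ cluster z (z v), A u j) / (csize z (z v) : ℝ)
          + blocksum A z (z u) (z v) / ((csize z (z u) : ℝ) * (csize z (z v) : ℝ)))

/-- The dual matrix `Γ`, defined blockwise by `Γ_{S_k} = 0` and, for `k ≠ ℓ`,
`Γ_{S_kS_ℓ} = −A_{S_kS_ℓ} − Λ_{S_kS_ℓ} + 𝟙α_{S_ℓ}ᵀ + α_{S_k}𝟙ᵀ`. -/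
def Gam {n r : ℕ} (A : Matrix (Fin n) (Fin n) ℝ) (z : Fin n → Fin r) (β : ℝ) :
    Matrix (Fin n) (Fin n) ℝ :=
  Matrix.of fun u v =>
    if z u = z v then 0
    else -A u v - Lam A z β u v + alpha A z β v + alpha A z β u

def pAux {n r : ℕ} (A : Matrix (Fin n) (Fin n) ℝ) (z : Fin n → Fin r) (β : ℝ)
    (k : Fin r) (j : Fin n) : ℝ :=
  if z j = k then alpha A z β j
  else (∑ i ∈ cluster z k, A i j) / (csize z k : ℝ)
    - blocksum A z k (z j) / ((csize z k : ℝ) * (csize z (z j) : ℝ))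

def qAux {n r : ℕ} (A : Matrix (Fin n) (Fin n) ℝ) (z : Fin n → Fin r) (β : ℝ)
    (i : Fin n) (l : Fin r) : ℝ :=
  if z i = l then alpha A z β i
  else (∑ j ∈ cluster z l, A i j) / (csize z l : ℝ)

lemma Lam_eq {n r : ℕ} (A : Matrix (Fin n) (Fin n) ℝ) (z : Fin n → Fin r) (β : ℝ)
    (i j : Fin n) :
    Lam A z β i j = (if i = j then β else 0) - A i j
      + pAux A z β (z i) j + qAux A z β i (z j) := by
  by_cases h : z i = z j
  · simp only [Lam, Matrix.of_apply, if_pos h, pAux, if_pos h.symm, qAux]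
    ring
  · have hij : i ≠ j := fun e => h (by rw [e])
    simp only [Lam, Matrix.of_apply, if_neg h, pAux, if_neg (fun e : z j = z i => h e.symm),
      qAux, if_neg hij]
    ring

/-- For every vector `u` summing to zero on each cluster,
`uᵀΛu = β·‖u‖² − uᵀAu`. -/
theorem quadratic_form_of_Lam (n r : ℕ) (hn : 1 ≤ n) (hr : 1 ≤ r)
    (z : Fin n → Fin r) (hz : Function.Surjective z)
    (A : Matrix (Fin n) (Fin n) ℝ) (hA : A.IsSymm) (β : ℝ) :
    ∀ u : Fin n → ℝ, (∀ k : Fin r, ∑ i ∈ cluster z k, u i = 0) →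
      u ⬝ᵥ (Lam A z β).mulVec u = β * (∑ i, u i ^ 2) - u ⬝ᵥ A.mulVec u := by
  intro x hx
  have hmem : ∀ (k : Fin r) (i : Fin n), i ∈ cluster z k → z i = k := by
    intro k i hi
    simpa [cluster] using hi
  have hfib : ∀ f : Fin n → ℝ, (∑ i, f i) = ∑ k, ∑ i ∈ cluster z k, f i := by
    intro f
    exact (Finset.sum_fiberwise Finset.univ z f).symm
  have expand : x ⬝ᵥ (Lam A z β).mulVec x = ∑ i, ∑ j, x i * (Lam A z β i j * x j) := by
    simp [dotProduct, mulVec, Finset.mul_sum]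
  have key : ∀ i j, x i * (Lam A z β i j * x j)
      = x i * ((if i = j then β else 0) * x j) - x i * (A i j * x j)
        + x i * (pAux A z β (z i) j * x j) + x i * (qAux A z β i (z j) * x j) := by
    intro i j; rw [Lam_eq]; ring
  rw [expand]
  simp only [key, Finset.sum_add_distrib, Finset.sum_sub_distrib]
  have p1 : (∑ i, ∑ j, x i * ((if i = j then β else 0) * x j)) = β * ∑ i, x i ^ 2 := by
    rw [Finset.mul_sum]
    refine Finset.sum_congr rfl fun i _ => ?_
    rw [Finset.sum_eq_single i]
    · simp only [if_pos rfl]; ring_nf; simp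
    · intro j _ hj; simp [Ne.symm hj]
    · simp
  have p2 : (∑ i, ∑ j, x i * (A i j * x j)) = x ⬝ᵥ A.mulVec x := by
    simp [dotProduct, mulVec, Finset.mul_sum]
  have p3 : (∑ i, ∑ j, x i * (pAux A z β (z i) j * x j)) = 0 := by
    have : ∀ i, (∑ j, x i * (pAux A z β (z i) j * x j))
        = x i * ∑ j, pAux A z β (z i) j * x j := by
      intro i; rw [Finset.mul_sum]
    simp only [this]
    rw [hfib]
    refine Finset.sum_eq_zero fun k _ => ?_
    have : ∀ i ∈ cluster z k, x i * (∑ j, pAux A z β (z i) j * x j)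
        = x i * ∑ j, pAux A z β k j * x j := by
      intro i hi; rw [hmem k i hi]
    rw [Finset.sum_congr rfl this, ← Finset.sum_mul, hx k, zero_mul]
  have p4 : (∑ i, ∑ j, x i * (qAux A z β i (z j) * x j)) = 0 := by
    rw [Finset.sum_comm]
    have : ∀ j, (∑ i, x i * (qAux A z β i (z j) * x j))
        = (∑ i, x i * qAux A z β i (z j)) * x j := by
      intro j; rw [Finset.sum_mul]; exact Finset.sum_congr rfl fun i _ => by ring
    simp only [this]
    rw [hfib]
    refine Finset.sum_eq_zero fun k _ => ?_
    have : ∀ j ∈ cluster z k, (∑ i, x i * qAux A z β i (z j)) * x j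
        = (∑ i, x i * qAux A z β i k) * x j := by
      intro j hj; rw [hmem k j hj]
    rw [Finset.sum_congr rfl this, ← Finset.mul_sum, hx k, mul_zero]
  rw [p1, p2, p3, p4]
  ring
end
end

section
/- Let A ∈ ℝ^{n×n} be symmetric, fix a partition of {1,…,n} into nonempty clusters S_1,…,S_r with sizes m_k, let β ∈ ℝ, and let Λ be the matrix of the dual construction. If uᵀAu ≤ β·‖u‖² for every u ∈ ℝ^n satisfying Σ_{i∈S_k} u_i = 0 for every cluster k, then Λ is positive semidefinite. -/
open Matrix BigOperators

noncomputable section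

namespace LamAux

variable {n r : ℕ}

/-- The centering projection `P = I - blockdiag(E/m)`. -/
def Pm (z : Fin n → Fin r) : Matrix (Fin n) (Fin n) ℝ :=
  Matrix.of fun u v =>
    (if u = v then (1 : ℝ) else 0) - (if z u = z v then 1 / (csize z (z u) : ℝ) else 0)

lemma mem_cluster {z : Fin n → Fin r} {k : Fin r} {i : Fin n} :
    i ∈ cluster z k ↔ z i = k := by simp [cluster]

lemma csize_pos (z : Fin n → Fin r) (hz : Function.Surjective z) (k : Fin r) :
    0 < csize z k := by
  obtain ⟨i, hi⟩ := hz k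
  exact Finset.card_pos.2 ⟨i, mem_cluster.2 hi⟩

lemma Pm_transpose (z : Fin n → Fin r) : (Pm z)ᵀ = Pm z := by
  ext u v
  simp only [Matrix.transpose_apply, Pm, Matrix.of_apply]
  have e1 : (if v = u then (1:ℝ) else 0) = (if u = v then (1:ℝ) else 0) := by
    by_cases huv : u = v
    · simp [huv]
    · simp [huv, Ne.symm huv]
  rw [e1]
  by_cases h : z u = z v
  · rw [if_pos h.symm, if_pos h, h]
  · rw [if_neg (show ¬ z v = z u from fun e => h e.symm), if_neg h]

lemma mul_Pm (z : Fin n → Fin r) (M : Matrix (Fin n) (Fin n) ℝ) (u v : Fin n) :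
    (M * Pm z) u v = M u v - (∑ b ∈ cluster z (z v), M u b) / (csize z (z v) : ℝ) := by
  have key : ∀ b, M u b * Pm z b v =
      (if b = v then M u b else 0) - (if z b = z v then M u b / (csize z (z v) : ℝ) else 0) := by
    intro b
    simp only [Pm, Matrix.of_apply]
    split_ifs with h1 h2 h2
    · rw [h2]; ring
    · ring
    · rw [h2]; ring
    · ring
  rw [Matrix.mul_apply]
  simp only [key]
  rw [Finset.sum_sub_distrib, Finset.sum_ite_eq' Finset.univ v (fun b => M u b),
    if_pos (Finset.mem_univ v)]
  congr 1
  rw [Finset.sum_div, cluster, Finset.sum_filter]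

lemma Pm_mul (z : Fin n → Fin r) (M : Matrix (Fin n) (Fin n) ℝ) (u v : Fin n) :
    (Pm z * M) u v = M u v - (∑ a ∈ cluster z (z u), M a v) / (csize z (z u) : ℝ) := by
  have key : ∀ a, Pm z u a * M a v =
      (if u = a then M a v else 0) - (if z a = z u then M a v / (csize z (z u) : ℝ) else 0) := by
    intro a
    simp only [Pm, Matrix.of_apply]
    by_cases h1 : u = a <;> by_cases h2 : z u = z a
    · rw [if_pos h1, if_pos h2, if_pos h1, if_pos h2.symm]; ring
    · rw [if_pos h1, if_neg h2, if_pos h1, if_neg (show ¬ z a = z u from fun e => h2 e.symm)]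
      ring
    · rw [if_neg h1, if_pos h2, if_neg h1, if_pos h2.symm]; ring
    · rw [if_neg h1, if_neg h2, if_neg h1, if_neg (show ¬ z a = z u from fun e => h2 e.symm)]
      ring
  rw [Matrix.mul_apply]
  simp only [key]
  rw [Finset.sum_sub_distrib, Finset.sum_ite_eq Finset.univ u (fun a => M a v),
    if_pos (Finset.mem_univ u)]
  congr 1
  rw [Finset.sum_div, cluster, Finset.sum_filter]

lemma Pm_mulVec (z : Fin n → Fin r) (x : Fin n → ℝ) (i : Fin n) :
    (Pm z *ᵥ x) i = x i - (∑ j ∈ cluster z (z i), x j) / (csize z (z i) : ℝ) := by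
  have key : ∀ j, Pm z i j * x j =
      (if i = j then x j else 0) - (if z j = z i then x j / (csize z (z i) : ℝ) else 0) := by
    intro j
    simp only [Pm, Matrix.of_apply]
    by_cases h1 : i = j <;> by_cases h2 : z i = z j
    · rw [if_pos h1, if_pos h2, if_pos h1, if_pos h2.symm]; ring
    · rw [if_pos h1, if_neg h2, if_pos h1, if_neg (show ¬ z j = z i from fun e => h2 e.symm)]
      ring
    · rw [if_neg h1, if_pos h2, if_neg h1, if_pos h2.symm]; ring
    · rw [if_neg h1, if_neg h2, if_neg h1, if_neg (show ¬ z j = z i from fun e => h2 e.symm)]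
      ring
  rw [Matrix.mulVec, dotProduct]
  simp only [key]
  rw [Finset.sum_sub_distrib, Finset.sum_ite_eq Finset.univ i (fun j => x j),
    if_pos (Finset.mem_univ i)]
  congr 1
  rw [Finset.sum_div, cluster, Finset.sum_filter]

lemma sum_Pm_mulVec (z : Fin n → Fin r) (hz : Function.Surjective z) (x : Fin n → ℝ)
    (k : Fin r) : ∑ i ∈ cluster z k, (Pm z *ᵥ x) i = 0 := by
  have hm : ((csize z k : ℝ)) ≠ 0 := Nat.cast_ne_zero.2 (csize_pos z hz k).ne'
  have e : ∀ i ∈ cluster z k, (Pm z *ᵥ x) i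
      = x i - (∑ j ∈ cluster z k, x j) / (csize z k : ℝ) := by
    intro i hi
    rw [Pm_mulVec, mem_cluster.1 hi]
  rw [Finset.sum_congr rfl e, Finset.sum_sub_distrib, Finset.sum_const, nsmul_eq_mul]
  rw [show ((cluster z k).card : ℝ) = (csize z k : ℝ) from rfl]
  rw [mul_div_cancel₀ _ hm, sub_self]

lemma Lam_eq (z : Fin n → Fin r) (hz : Function.Surjective z)
    (A : Matrix (Fin n) (Fin n) ℝ) (hA : A.IsSymm) (β : ℝ) :
    Lam A z β = Pm z * (β • (1 : Matrix (Fin n) (Fin n) ℝ) - A) * Pm z := by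
  have hm : ∀ k, ((csize z k : ℝ)) ≠ 0 := fun k => Nat.cast_ne_zero.2 (csize_pos z hz k).ne'
  have hMe : ∀ a b, (β • (1 : Matrix (Fin n) (Fin n) ℝ) - A) a b
      = (if a = b then β else 0) - A a b := by
    intro a b
    simp only [Matrix.sub_apply, Matrix.smul_apply, Matrix.one_apply, smul_eq_mul,
      mul_ite, mul_one, mul_zero]
  ext u v
  rw [mul_Pm]
  simp only [Pm_mul]
  have hcol : ∀ (k : Fin r) (w : Fin n),
      ∑ a ∈ cluster z k, (β • (1 : Matrix (Fin n) (Fin n) ℝ) - A) a w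
        = (if z w = k then β else 0) - ∑ a ∈ cluster z k, A a w := by
    intro k w
    simp only [hMe]
    rw [Finset.sum_sub_distrib, Finset.sum_ite_eq' (cluster z k) w (fun _ => β)]
    congr 1
    by_cases hw : z w = k
    · rw [if_pos (mem_cluster.2 hw), if_pos hw]
    · rw [if_neg (fun c => hw (mem_cluster.1 c)), if_neg hw]
  have hrow : ∀ (k : Fin r) (w : Fin n),
      ∑ b ∈ cluster z k, (β • (1 : Matrix (Fin n) (Fin n) ℝ) - A) w b
        = (if z w = k then β else 0) - ∑ b ∈ cluster z k, A w b := by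
    intro k w
    simp only [hMe]
    rw [Finset.sum_sub_distrib, Finset.sum_ite_eq (cluster z k) w (fun _ => β)]
    congr 1
    by_cases hw : z w = k
    · rw [if_pos (mem_cluster.2 hw), if_pos hw]
    · rw [if_neg (fun c => hw (mem_cluster.1 c)), if_neg hw]
  rw [Finset.sum_sub_distrib, ← Finset.sum_div]
  simp only [hcol, hrow]
  rw [Finset.sum_sub_distrib]
  have hif : ∑ b ∈ cluster z (z v), (if z b = z u then β else 0)
      = if z v = z u then (csize z (z v) : ℝ) * β else 0 := by
    have e : ∀ b ∈ cluster z (z v), (if z b = z u then β else 0)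
        = (if z v = z u then β else 0) := fun b hb => by rw [mem_cluster.1 hb]
    rw [Finset.sum_congr rfl e, Finset.sum_const, nsmul_eq_mul]
    by_cases hvu : z v = z u
    · rw [if_pos hvu, if_pos hvu]; rfl
    · rw [if_neg hvu, if_neg hvu, mul_zero]
  rw [hif, Finset.sum_comm, hMe]
  by_cases h : z u = z v
  · simp only [Lam, Matrix.of_apply, if_pos h, alpha, phi, deg, blocksum]
    simp only [h]
    simp only [eq_self_iff_true, if_true, ite_true]
    have hsymc : ∑ a ∈ cluster z (z v), A a v = ∑ j ∈ cluster z (z v), A v j :=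
      Finset.sum_congr rfl (fun a _ => (hA.apply a v).symm)
    rw [hsymc]
    generalize (if u = v then (β:ℝ) else 0) = t
    field_simp [hm (z v)]
    ring
  · have huv : u ≠ v := fun e => h (by rw [e])
    simp only [Lam, Matrix.of_apply, if_neg h, blocksum]
    simp only [if_neg h, if_neg (show ¬ z v = z u from fun e => h e.symm), if_neg huv]
    field_simp [hm (z u), hm (z v)]
    ring

end LamAux

/-- If `uᵀAu ≤ β‖u‖²` for every vector `u` summing to zero on each cluster, then the
dual matrix `Λ` is positive semidefinite. -/
theorem Lam_posSemidef (n r : ℕ) (hn : 1 ≤ n) (hr : 1 ≤ r)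
    (z : Fin n → Fin r) (hz : Function.Surjective z)
    (A : Matrix (Fin n) (Fin n) ℝ) (hA : A.IsSymm) (β : ℝ)
    (hquad : ∀ u : Fin n → ℝ, (∀ k : Fin r, ∑ i ∈ cluster z k, u i = 0) →
      u ⬝ᵥ A.mulVec u ≤ β * ∑ i, u i ^ 2) :
    (Lam A z β).PosSemidef := by
  have key := LamAux.Lam_eq z hz A hA β
  rw [Matrix.posSemidef_iff_dotProduct_mulVec]
  constructor
  · show (Lam A z β)ᴴ = Lam A z β
    rw [Matrix.conjTranspose_eq_transpose_of_trivial, key]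
    rw [Matrix.transpose_mul, Matrix.transpose_mul, LamAux.Pm_transpose]
    rw [Matrix.transpose_sub, Matrix.transpose_smul, Matrix.transpose_one, hA,
      ← Matrix.mul_assoc]
  · intro x
    rw [star_trivial, key, ← Matrix.mulVec_mulVec, ← Matrix.mulVec_mulVec,
      dotProduct_mulVec]
    set u : Fin n → ℝ := LamAux.Pm z *ᵥ x with hu
    have hxP : x ᵥ* LamAux.Pm z = u := by
      rw [← LamAux.Pm_transpose z, Matrix.vecMul_transpose]
    rw [hxP, Matrix.sub_mulVec, dotProduct_sub]
    have h1 : (β • (1 : Matrix (Fin n) (Fin n) ℝ)) *ᵥ u = β • u := by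
      rw [Matrix.smul_mulVec, Matrix.one_mulVec]
    rw [h1, dotProduct_smul, smul_eq_mul]
    have h2 : u ⬝ᵥ u = ∑ i, u i ^ 2 := by
      simp [dotProduct, pow_two]
    rw [h2]
    have h3 := hquad u (fun k => LamAux.sum_Pm_mulVec z hz x k)
    linarith
end
end

section
/- Let X be a Binomial(m, p) random variable with m ≥ 1 and p ∈ (0, 1], and let n ≥ 1 be an integer such that log n ≤ 2·m·p. Then P( X/m ≥ p + √(18·p·log n / m) ) ≤ n^{−3}. -/
open MeasureTheory ProbabilityTheory BigOperators

lemma exp_quad_one {u : ℝ} (h0 : 0 ≤ u) (h1 : u ≤ 1) :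
    Real.exp u ≤ 1 + u + 0.75 * u ^ 2 := by
  have h := Real.exp_bound' h0 h1 (n := 2) (by norm_num)
  simp [Finset.sum_range_succ, Nat.factorial] at h
  nlinarith [h]

lemma exp_quad {u : ℝ} (h0 : 0 ≤ u) (h2 : u ≤ 2) :
    Real.exp u ≤ 1 + u + 1.5 * u ^ 2 := by
  rcases le_or_gt u 1 with h1 | h1
  · nlinarith [exp_quad_one h0 h1]
  · have hv0 : (0:ℝ) ≤ u - 1 := by linarith
    have hv1 : u - 1 ≤ 1 := by linarith
    have h := exp_quad_one hv0 hv1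
    have he : Real.exp u = Real.exp 1 * Real.exp (u - 1) := by
      rw [← Real.exp_add]; ring_nf
    have hexp1 : Real.exp 1 < 2.7182818286 := Real.exp_one_lt_d9
    have hexp1' : (0:ℝ) < Real.exp 1 := Real.exp_pos 1
    rw [he]
    nlinarith [sq_nonneg (u-1), mul_le_mul_of_nonneg_left h hexp1'.le]

/-- Upper Chernoff tail for a Binomial(m, p) random variable, realized as a sum of `m`
independent Bernoulli(p) random variables: if `log n ≤ 2·m·p`, then
`P(X/m ≥ p + √(18·p·log n / m)) ≤ n⁻³`. -/
theorem binomial_upper_tail (m n : ℕ) (p : ℝ) (hm : 1 ≤ m) (hn : 1 ≤ n)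
    (hp0 : 0 < p) (hp1 : p ≤ 1) (hlog : Real.log n ≤ 2 * m * p)
    (Ω : Type) (_ : MeasurableSpace Ω) (μ : Measure Ω) (hμ : IsProbabilityMeasure μ)
    (Y : Fin m → Ω → ℝ)
    (hmeas : ∀ i, Measurable (Y i))
    (hval : ∀ i ω, Y i ω = 0 ∨ Y i ω = 1)
    (hindep : iIndepFun Y μ)
    (hbern : ∀ i, μ {ω | Y i ω = 1} = ENNReal.ofReal p) :
    μ {ω | p + Real.sqrt (18 * p * Real.log n / m) ≤ (∑ i, Y i ω) / (m : ℝ)}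
      ≤ ((n : ENNReal) ^ 3)⁻¹ := by
  set L := Real.log n with hLdef
  have hm0 : (0:ℝ) < m := by exact_mod_cast hm
  have hn0 : (0:ℝ) < n := by exact_mod_cast hn
  have hL0 : 0 ≤ L := Real.log_natCast_nonneg n
  set ε := Real.sqrt (18 * p * L / m) with hεdef
  have hε0 : 0 ≤ ε := Real.sqrt_nonneg _
  have hε2 : ε ^ 2 = 18 * p * L / m := by
    rw [hεdef, Real.sq_sqrt]
    positivity
  set t := ε / (3 * p) with htdef
  have ht0 : 0 ≤ t := by positivity
  -- t ≤ 2
  have ht2 : t ≤ 2 := by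
    have hε6p : ε ≤ 6 * p := by
      have h1 : ε ^ 2 ≤ (6 * p) ^ 2 := by
        rw [hε2]
        rw [div_le_iff₀ hm0]
        nlinarith [mul_le_mul_of_nonneg_left hlog (le_of_lt hp0)]
      nlinarith [sq_nonneg (ε - 6*p), sq_nonneg (ε + 6*p)]
    rw [htdef, div_le_iff₀ (by positivity)]
    linarith
  have h3pt : 3 * p * t = ε := by rw [htdef]; field_simp
  have hε2m : ε ^ 2 * m = 18 * p * L := by
    rw [hε2]; field_simp
  -- Bernoulli facts
  have hA : ∀ i, MeasurableSet {ω | Y i ω = 1} := fun i =>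
    (hmeas i) (measurableSet_singleton 1)
  have hYind : ∀ i, Y i = Set.indicator {ω | Y i ω = 1} (fun _ => (1:ℝ)) := by
    intro i; funext ω
    rcases hval i ω with h | h
    · rw [h, Set.indicator_apply_eq_zero.mpr]
      intro hω; simp at hω; rw [h] at hω; norm_num at hω
    · rw [h, Set.indicator_of_mem (by exact h)]
  have hYint : ∀ i, Integrable (Y i) μ := by
    intro i
    rw [hYind i]
    exact (integrable_const (1:ℝ)).indicator (hA i)
  have hEY : ∀ i, ∫ ω, Y i ω ∂μ = p := by
    intro i
    have : ∫ ω, Y i ω ∂μ = ∫ ω, Set.indicator {ω | Y i ω = 1} (fun _ => (1:ℝ)) ω ∂μ := by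
      rw [← hYind i]
    rw [this, integral_indicator_const _ (hA i), measureReal_def, hbern i, smul_eq_mul,
      ENNReal.toReal_ofReal hp0.le, mul_one]
  have hexp_eq : ∀ i, (fun ω => Real.exp (t * Y i ω))
      = fun ω => 1 + (Real.exp t - 1) * Y i ω := by
    intro i; funext ω
    rcases hval i ω with h | h <;> simp [h]
  have hint_exp : ∀ i, Integrable (fun ω => Real.exp (t * Y i ω)) μ := by
    intro i
    rw [hexp_eq i]
    exact (integrable_const (1:ℝ)).add ((hYint i).const_mul _)
  have hmgf_i : ∀ i, mgf (Y i) μ t = 1 + p * (Real.exp t - 1) := by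
    intro i
    rw [mgf, hexp_eq i, integral_add (integrable_const 1) ((hYint i).const_mul _),
      integral_const, integral_const_mul, hEY i]
    simp [mul_comm]
  -- the sum
  set S : Ω → ℝ := ∑ i, Y i with hSdef
  have hSapp : ∀ ω, S ω = ∑ i, Y i ω := fun ω => by rw [hSdef]; simp
  have hevent : {ω | p + ε ≤ (∑ i, Y i ω) / (m:ℝ)} = {ω | (p + ε) * m ≤ S ω} := by
    ext ω
    simp only [Set.mem_setOf_eq, hSapp]
    exact le_div_iff₀ hm0
  rw [hevent]
  have hint_sum : Integrable (fun ω => Real.exp (t * S ω)) μ :=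
    hindep.integrable_exp_mul_sum hmeas (fun i _ => hint_exp i)
  have hcher := measure_ge_le_exp_mul_mgf (X := S) (μ := μ) ((p + ε) * m) ht0 hint_sum
  have hmgf_sum : mgf S μ t = (1 + p * (Real.exp t - 1)) ^ m := by
    rw [hSdef, hindep.mgf_sum hmeas]
    simp [hmgf_i]
  have hbase0 : (0:ℝ) ≤ 1 + p * (Real.exp t - 1) := by
    nlinarith [Real.add_one_le_exp t, Real.exp_pos t]
  have hmgf_le : mgf S μ t ≤ Real.exp ((m:ℝ) * (p * (Real.exp t - 1))) := by
    rw [hmgf_sum, Real.exp_nat_mul]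
    apply pow_le_pow_left₀ hbase0
    linarith [Real.add_one_le_exp (p * (Real.exp t - 1))]
  -- numeric estimate
  have hε2' : ε ^ 2 = 9 * p ^ 2 * t ^ 2 := by rw [← h3pt]; ring
  have h2L : (m:ℝ) * p * t ^ 2 = 2 * L := by
    have h := hε2m
    rw [hε2'] at h
    have h9 : 9 * p * ((m:ℝ) * p * t ^ 2) = 9 * p * (2 * L) := by ring_nf; ring_nf at h; linarith
    exact mul_left_cancel₀ (by positivity) h9
  have htε : t * ε = 3 * p * t ^ 2 := by rw [← h3pt]; ring
  have hkey : -t * ((p + ε) * m) + (m:ℝ) * (p * (Real.exp t - 1)) ≤ -(3 * L) := by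
    have hq := exp_quad ht0 ht2
    have htεm : (m:ℝ) * (t * ε) = 3 * ((m:ℝ) * p * t ^ 2) := by rw [htε]; ring
    nlinarith [mul_le_mul_of_nonneg_left hq (mul_nonneg hm0.le hp0.le), htεm, h2L]
  have hnum : Real.exp (-t * ((p + ε) * m)) * mgf S μ t ≤ ((n:ℝ) ^ 3)⁻¹ := by
    calc Real.exp (-t * ((p + ε) * m)) * mgf S μ t
        ≤ Real.exp (-t * ((p + ε) * m)) * Real.exp ((m:ℝ) * (p * (Real.exp t - 1))) := by
          exact mul_le_mul_of_nonneg_left hmgf_le (Real.exp_pos _).le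
      _ = Real.exp (-t * ((p + ε) * m) + (m:ℝ) * (p * (Real.exp t - 1))) := by
          rw [Real.exp_add]
      _ ≤ Real.exp (-(3 * L)) := Real.exp_le_exp.mpr hkey
      _ = ((n:ℝ) ^ 3)⁻¹ := by
          rw [Real.exp_neg]
          congr 1
          rw [show (3:ℝ) * L = ((3:ℕ):ℝ) * L by norm_num, Real.exp_nat_mul, hLdef,
            Real.exp_log hn0]
  calc μ {ω | (p + ε) * m ≤ S ω}
      = ENNReal.ofReal (μ {ω | (p + ε) * m ≤ S ω}).toReal :=
        (ENNReal.ofReal_toReal (measure_ne_top μ _)).symm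
    _ ≤ ENNReal.ofReal (((n:ℝ) ^ 3)⁻¹) := ENNReal.ofReal_le_ofReal (hcher.trans hnum)
    _ = ((n : ENNReal) ^ 3)⁻¹ := by
        rw [ENNReal.ofReal_inv_of_pos (by positivity), ENNReal.ofReal_pow hn0.le,
          ENNReal.ofReal_natCast]
end
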